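/- Let G be a connected (n,k,λ,μ)-strongly regular graph on vertex set V that is not complete (there exist two distinct non-adjacent vertices) and is not a complete bipartite graph K_{m,m} (equivalently, it is not the case that both λ = 0 and μ = k). Then for every pair of adjacent vertices u and v, the class of the vector e_u − e_v (where e_w denotes the standard basis vector supported at w) in the critical group K(G) has additive order exactly n·μ. -/

import Mathlib

open Finset

/-- The subgroup of integer vectors whose coordinates sum to zero. -/
def sumZero (V : Type*) [Fintype V] : AddSubgroup (V → ℤ) where
  carrier := {x | ∑ v, x v = 0}
  add_mem' {a b} ha hb := by
    simp only [Set.mem_setOf_eq] at *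
    simp [Finset.sum_add_distrib, ha, hb]
  zero_mem' := by simp
  neg_mem' {a} ha := by
    simp only [Set.mem_setOf_eq] at *
    simp [ha]

/-- The ℤ-span of the rows of an integer matrix, as an additive subgroup of `V → ℤ`. -/
def rowSpan {V : Type*} [Fintype V] (L : Matrix V V ℤ) : AddSubgroup (V → ℤ) :=
  (Submodule.span ℤ (Set.range fun w => L w)).toAddSubgroup

/-- The critical group of a graph: the quotient of the sum-zero vectors by the
row span of the Laplacian. -/
def critGroup {V : Type*} [Fintype V] [DecidableEq V] (G : SimpleGraph V)
    [DecidableRel G.Adj] :=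
  sumZero V ⧸ (rowSpan (G.lapMatrix ℤ)).addSubgroupOf (sumZero V)

noncomputable instance {V : Type*} [Fintype V] [DecidableEq V] (G : SimpleGraph V)
    [DecidableRel G.Adj] : AddCommGroup (critGroup G) :=
  QuotientAddGroup.Quotient.addCommGroup _

/-- The vector `e_u - e_v`, as an element of the sum-zero subgroup. -/
def chipDiff {V : Type*} [Fintype V] [DecidableEq V] (u v : V) : sumZero V :=
  ⟨Pi.single u 1 - Pi.single v 1, by
    show ∑ w, (Pi.single u 1 - Pi.single v 1 : V → ℤ) w = 0
    simp [Finset.sum_sub_distrib, Finset.sum_pi_single]⟩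


open SimpleGraph Matrix
section Aux

variable {V : Type*} [Fintype V] [DecidableEq V] (G : SimpleGraph V) [DecidableRel G.Adj]

omit [Fintype V] [DecidableEq V] in
lemma crit_exists_path2 : ∀ {a b : V}, G.Walk a b →
    a = b ∨ G.Adj a b ∨ ∃ p q r, G.Adj p q ∧ G.Adj q r ∧ p ≠ r ∧ ¬ G.Adj p r := by
  intro a b w
  induction w with
  | nil => exact Or.inl rfl
  | @cons a c b h p ih =>
    rcases ih with rfl | hadj | ht
    · exact Or.inr (Or.inl h)
    · by_cases hab : a = b
      · exact Or.inl hab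
      · by_cases hAB : G.Adj a b
        · exact Or.inr (Or.inl hAB)
        · exact Or.inr (Or.inr ⟨a, c, b, h, hadj, hab, hAB⟩)
    · exact Or.inr (Or.inr ht)

lemma crit_lap_offdiag {a b : V} (hab : a ≠ b) :
    G.lapMatrix ℤ a b = if G.Adj a b then -1 else 0 := by
  by_cases hadj : G.Adj a b <;>
    simp [lapMatrix, degMatrix, Matrix.diagonal_apply_ne _ hab, hadj]

lemma crit_mulVec_eq_sum (x : V → ℤ) :
    (G.lapMatrix ℤ).mulVec x = ∑ w, x w • G.lapMatrix ℤ w := by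
  funext a
  simp only [Matrix.mulVec, dotProduct, Finset.sum_apply, Pi.smul_apply, smul_eq_mul]
  exact Finset.sum_congr rfl fun w _ => by
    rw [(G.isSymm_lapMatrix (R := ℤ)).apply a w, mul_comm]

lemma crit_mem_span_iff (y : V → ℤ) :
    y ∈ Submodule.span ℤ (Set.range fun w => G.lapMatrix ℤ w) ↔
      ∃ x : V → ℤ, (G.lapMatrix ℤ).mulVec x = y := by
  rw [Submodule.mem_span_range_iff_exists_fun]
  constructor
  · rintro ⟨c, hc⟩; exact ⟨c, by rw [crit_mulVec_eq_sum]; exact hc⟩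
  · rintro ⟨c, hc⟩; exact ⟨c, by rw [← crit_mulVec_eq_sum]; exact hc⟩

lemma crit_lap_sq {n k l μ : ℕ} (hsrg : G.IsSRGWith n k l μ)
    (hkl : l + 1 ≤ k) (hkn : k + 1 ≤ n) :
    G.lapMatrix ℤ * G.lapMatrix ℤ =
      (2*(k:ℤ) + μ - l) • G.lapMatrix ℤ + (μ:ℤ) • (Matrix.of fun _ _ => (1:ℤ))
        - ((n:ℤ)*μ) • 1 := by
  set A := G.adjMatrix ℤ with hA
  set J : Matrix V V ℤ := Matrix.of fun _ _ => 1 with hJ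
  have hC : Gᶜ.adjMatrix ℤ = J - 1 - A := by
    ext i j
    by_cases hij : i = j
    · subst hij; simp [hJ, hA]
    · by_cases hadj : G.Adj i j <;>
        simp [hJ, hA, compl_adj, hij, hadj, Matrix.one_apply, Ne.symm hij]
  have hA2 : A * A = (k:ℤ) • (1 : Matrix V V ℤ) + (l:ℤ) • A + (μ:ℤ) • (J - 1 - A) := by
    have h := hsrg.matrix_eq (α := ℤ)
    rw [sq, hC] at h
    rw [h]
    simp [Nat.cast_smul_eq_nsmul, hA]
  have hL : G.lapMatrix ℤ = (k:ℤ) • 1 - A := by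
    rw [lapMatrix]
    congr 1
    ext i j
    by_cases hij : i = j
    · subst hij
      simp [degMatrix, hsrg.regular i, Matrix.one_apply, Matrix.smul_apply]
    · simp [degMatrix, Matrix.diagonal_apply_ne _ hij, Matrix.one_apply, hij,
        Matrix.smul_apply]
  have param : (k:ℤ) * ((k:ℤ) - l - 1) = ((n:ℤ) - k - 1) * μ := by
    have h := SimpleGraph.IsSRGWith.param_eq G hsrg (by omega)
    rw [Nat.sub_sub, Nat.sub_sub] at h
    zify [hkl, hkn] at h
    linear_combination h
  have hnμ : (n:ℤ) * μ = (k:ℤ) * ((k:ℤ) - l - 1) + (μ:ℤ) * ((k:ℤ) + 1) := by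
    rw [param]; ring
  have expand : ((k:ℤ)•(1:Matrix V V ℤ) - A) * ((k:ℤ)•1 - A)
      = ((k:ℤ)*k) • 1 - (2*(k:ℤ)) • A + A * A := by
    simp only [sub_mul, mul_sub, smul_mul_assoc, mul_smul_comm,
      one_mul, mul_one, smul_smul]
    module
  rw [hL, expand, hA2, hnμ]
  module

end Aux

theorem stmt0 {V : Type*} [Fintype V] [DecidableEq V] (G : SimpleGraph V)
    [DecidableRel G.Adj] {n k l μ : ℕ}
    (hsrg : G.IsSRGWith n k l μ) (hconn : G.Connected)
    (hnotcomplete : ∃ x y : V, x ≠ y ∧ ¬G.Adj x y)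
    (hnotbip : ¬(l = 0 ∧ μ = k))
    (u v : V) (huv : G.Adj u v) :
    addOrderOf ((QuotientAddGroup.mk (chipDiff u v)) : critGroup G) = n * μ := by
  classical
  set d : V → ℤ := Pi.single u 1 - Pi.single v 1 with hd
  -- basic numeric facts
  have hμpos : 0 < μ := by
    obtain ⟨x, y, hxy, hnadj⟩ := hnotcomplete
    obtain ⟨w⟩ := hconn.preconnected x y
    rcases crit_exists_path2 G w with rfl | h | ⟨p, q, r, h1, h2, h3, h4⟩
    · exact absurd rfl hxy
    · exact absurd h hnadj
    · have hq : q ∈ G.commonNeighbors p r := ⟨h1, h2.symm⟩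
      have hμ := hsrg.of_not_adj h3 h4
      rw [← hμ]
      exact Fintype.card_pos_iff.mpr ⟨⟨q, hq⟩⟩
  have hkl1 : l + 1 ≤ k := by
    have h1 := huv.card_commonNeighbors_lt_degree
    rw [hsrg.of_adj u v huv, hsrg.regular u] at h1
    omega
  have hkn : k + 1 ≤ n := by
    have h1 := G.degree_lt_card_verts u
    rw [hsrg.regular u, hsrg.card] at h1
    omega
  have hnotcompl' : ¬ (n = k + 1) := by
    intro hnk
    obtain ⟨x, y, hxy, hnadj⟩ := hnotcomplete
    have hdeg : (G.neighborFinset x).card = k := by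
      rw [card_neighborFinset_eq_degree, hsrg.regular x]
    have hsub : G.neighborFinset x ⊆ Finset.univ.erase x := fun w hw =>
      Finset.mem_erase.mpr ⟨(G.ne_of_adj ((G.mem_neighborFinset x w).mp hw)).symm,
        Finset.mem_univ w⟩
    have hcard : (Finset.univ.erase x).card = k := by
      rw [Finset.card_erase_of_mem (Finset.mem_univ x), Finset.card_univ, hsrg.card]
      omega
    have heq := Finset.eq_of_subset_of_card_le hsub (by omega)
    apply hnadj
    rw [← SimpleGraph.mem_neighborFinset, heq]
    exact Finset.mem_erase.mpr ⟨hxy.symm, Finset.mem_univ y⟩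
  have hkl2 : l + 2 ≤ k := by
    by_contra hc
    have hparam := SimpleGraph.IsSRGWith.param_eq G hsrg (by omega)
    have hz : k - l - 1 = 0 := by omega
    rw [hz, Nat.mul_zero] at hparam
    rcases Nat.mul_eq_zero.mp hparam.symm with h' | h' <;> omega
  -- the two witness vertices
  have hgetw1 : ∃ w, G.Adj u w ∧ ¬ G.Adj v w ∧ w ≠ u ∧ w ≠ v := by
    have hS : ¬ (G.neighborFinset u ⊆ insert v (G.commonNeighbors u v).toFinset) := by
      intro hsub
      have h1 := Finset.card_le_card hsub
      rw [card_neighborFinset_eq_degree, hsrg.regular u] at h1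
      have h2 := Finset.card_insert_le v (G.commonNeighbors u v).toFinset
      have h3 : (G.commonNeighbors u v).toFinset.card = l := by
        rw [Set.toFinset_card, hsrg.of_adj u v huv]
      omega
    obtain ⟨w, hw1, hw2⟩ := Finset.not_subset.mp hS
    have hadj : G.Adj u w := (G.mem_neighborFinset u w).mp hw1
    rw [Finset.mem_insert] at hw2
    push_neg at hw2
    refine ⟨w, hadj, fun hvw => hw2.2 ?_, (G.ne_of_adj hadj).symm, hw2.1⟩
    rw [Set.mem_toFinset]
    exact ⟨hadj, hvw⟩
  have hgetw2 : ∃ w, w ≠ u ∧ w ≠ v ∧ (G.lapMatrix ℤ) w u = (G.lapMatrix ℤ) w v := by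
    by_cases hl : 0 < l
    · have hcpos : 0 < Fintype.card (G.commonNeighbors u v) := by
        rw [hsrg.of_adj u v huv]; exact hl
      obtain ⟨⟨q, hq⟩⟩ := Fintype.card_pos_iff.mp hcpos
      have hqu : G.Adj q u := hq.1.symm
      have hqv : G.Adj q v := hq.2.symm
      refine ⟨q, G.ne_of_adj hqu, G.ne_of_adj hqv, ?_⟩
      rw [crit_lap_offdiag G (G.ne_of_adj hqu), crit_lap_offdiag G (G.ne_of_adj hqv)]
      simp [hqu, hqv]
    · have hl0 : l = 0 := by omega
      have hμk : μ ≠ k := fun h => hnotbip ⟨hl0, h⟩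
      have hμle : μ ≤ k := by
        obtain ⟨x, y, hxy, hnadj⟩ := hnotcomplete
        have h1 := G.card_commonNeighbors_le_degree_left x y
        rw [hsrg.of_not_adj hxy hnadj, hsrg.regular x] at h1
        exact h1
      have hparam := SimpleGraph.IsSRGWith.param_eq G hsrg (by omega)
      rw [hl0] at hparam
      have hn2k : 2*k + 1 ≤ n := by
        have h1 : k * (k - 0 - 1) ≤ (n - k - 1) * (k - 1) :=
          hparam ▸ Nat.mul_le_mul_left _ (by omega)
        have h2 : k ≤ n - k - 1 := Nat.le_of_mul_le_mul_right (by simpa using h1) (by omega)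
        omega
      have hcard : (G.neighborFinset u ∪ G.neighborFinset v).card < Fintype.card V := by
        calc (G.neighborFinset u ∪ G.neighborFinset v).card
            ≤ (G.neighborFinset u).card + (G.neighborFinset v).card :=
              Finset.card_union_le _ _
          _ ≤ 2 * k := by
              rw [card_neighborFinset_eq_degree, card_neighborFinset_eq_degree,
                hsrg.regular u, hsrg.regular v]
              omega
          _ < Fintype.card V := by rw [hsrg.card]; omega
      have hex : ∃ w, w ∉ G.neighborFinset u ∪ G.neighborFinset v := by
        by_contra hcon
        push_neg at hcon
        have := Finset.card_le_card (fun w _ => hcon w : Finset.univ ⊆ _)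
        rw [Finset.card_univ] at this
        omega
      obtain ⟨w, hw⟩ := hex
      rw [Finset.mem_union] at hw
      push_neg at hw
      have hwu : ¬ G.Adj u w := fun h => hw.1 ( (G.mem_neighborFinset _ _).mpr h)
      have hwv : ¬ G.Adj v w := fun h => hw.2 ( (G.mem_neighborFinset _ _).mpr h)
      have hwu' : w ≠ u := by
        rintro rfl
        exact hwv huv.symm
      have hwv' : w ≠ v := by
        rintro rfl
        exact hwu huv
      refine ⟨w, hwu', hwv', ?_⟩
      rw [crit_lap_offdiag G hwu', crit_lap_offdiag G hwv',
        if_neg (fun h : G.Adj w u => hwu h.symm), if_neg (fun h : G.Adj w v => hwv h.symm)]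
  -- the key matrix identity
  have hLL := crit_lap_sq G hsrg hkl1 hkn
  set c : ℤ := 2*(k:ℤ) + μ - l with hc
  have hsum_d : ∑ a, d a = 0 := by
    rw [hd]
    simp [Finset.sum_sub_distrib, Finset.sum_pi_single]
  have hJx : ∀ x : V → ℤ, (Matrix.of fun _ _ => (1:ℤ) : Matrix V V ℤ).mulVec x
      = (∑ a, x a) • (fun _ : V => (1:ℤ)) := by
    intro x
    funext a
    simp [Matrix.mulVec, dotProduct]
  have hmain : ∀ x : V → ℤ, (G.lapMatrix ℤ).mulVec ((G.lapMatrix ℤ).mulVec x) =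
      c • (G.lapMatrix ℤ).mulVec x + ((μ:ℤ) * ∑ a, x a) • (fun _ : V => (1:ℤ)) - ((n:ℤ)*μ) • x := by
    intro x
    rw [Matrix.mulVec_mulVec, hLL, Matrix.sub_mulVec, Matrix.add_mulVec,
      Matrix.smul_mulVec, Matrix.smul_mulVec, Matrix.smul_mulVec,
      Matrix.one_mulVec, hJx x, smul_smul]
  -- forward: (nμ) • d lies in the span
  have hfwd_mem : ((n:ℤ)*μ) • d ∈ Submodule.span ℤ (Set.range fun w => (G.lapMatrix ℤ) w) := by
    rw [crit_mem_span_iff]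
    refine ⟨c • d - (G.lapMatrix ℤ).mulVec d, ?_⟩
    rw [Matrix.mulVec_sub, Matrix.mulVec_smul, hmain d, hsum_d]
    simp only [mul_zero, zero_smul]
    abel
  -- quotient bookkeeping
  have hiff : ∀ N : ℕ, N • ((QuotientAddGroup.mk (chipDiff u v)) : critGroup G) = 0 ↔
      ((N:ℤ) • d) ∈ Submodule.span ℤ (Set.range fun w => (G.lapMatrix ℤ) w) := by
    intro N
    have hmk : (N • (QuotientAddGroup.mk (chipDiff u v)) : critGroup G)
        = QuotientAddGroup.mk (N • chipDiff u v) :=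
      ((QuotientAddGroup.mk' _).map_nsmul N (chipDiff u v)).symm
    erw [hmk]; rw [QuotientAddGroup.eq_zero_iff, AddSubgroup.mem_addSubgroupOf]
    have hcoe : ((N • chipDiff u v : sumZero V) : V → ℤ) = (N:ℤ) • d := by
      rw [Nat.cast_smul_eq_nsmul]
      rfl
    rw [rowSpan, Submodule.mem_toAddSubgroup, hcoe]
  have h1 : addOrderOf ((QuotientAddGroup.mk (chipDiff u v)) : critGroup G) ∣ n * μ := by
    apply addOrderOf_dvd_of_nsmul_eq_zero
    rw [hiff]
    push_cast
    exact hfwd_mem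
  have h2 : n * μ ∣ addOrderOf ((QuotientAddGroup.mk (chipDiff u v)) : critGroup G) := by
    set N := addOrderOf ((QuotientAddGroup.mk (chipDiff u v)) : critGroup G) with hN
    have hzero : N • ((QuotientAddGroup.mk (chipDiff u v)) : critGroup G) = 0 :=
      addOrderOf_nsmul_eq_zero _
    have hsp := (hiff N).mp hzero
    obtain ⟨x, hx⟩ := (crit_mem_span_iff G _).mp hsp
    set m : ℤ := (N : ℤ) with hm
    have heq : ((n:ℤ)*μ) • x = (c * m) • d
        + ((μ:ℤ) * ∑ a, x a) • (fun _ : V => (1:ℤ)) - m • (G.lapMatrix ℤ).mulVec d := by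
      have h2 := hmain x
      rw [hx, Matrix.mulVec_smul] at h2
      rw [h2]
      module
    obtain ⟨w1, hw1u, hw1v, hw1nu, hw1nv⟩ := hgetw1
    obtain ⟨w2, hw2u, hw2v, hw2L⟩ := hgetw2
    have hLd : ∀ a, (G.lapMatrix ℤ).mulVec d a = (G.lapMatrix ℤ) a u - (G.lapMatrix ℤ) a v := by
      intro a
      rw [hd, Matrix.mulVec_sub]
      simp
    have hdw1 : d w1 = 0 := by
      rw [hd]
      simp [Pi.single_eq_of_ne hw1nu, Pi.single_eq_of_ne hw1nv]
    have hdw2 : d w2 = 0 := by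
      rw [hd]
      simp [Pi.single_eq_of_ne hw2u, Pi.single_eq_of_ne hw2v]
    have hLw1u : (G.lapMatrix ℤ) w1 u = -1 := by
      rw [crit_lap_offdiag G hw1nu]
      simp [hw1u.symm]
    have hLw1v : (G.lapMatrix ℤ) w1 v = 0 := by
      rw [crit_lap_offdiag G hw1nv, if_neg (fun h : G.Adj w1 v => hw1v h.symm)]
    have e1 := congrFun heq w1
    have e2 := congrFun heq w2
    simp only [Pi.smul_apply, Pi.add_apply, Pi.sub_apply, smul_eq_mul] at e1 e2
    rw [hLd w1, hdw1, hLw1u, hLw1v] at e1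
    rw [hLd w2, hdw2, hw2L] at e2
    have hmval : m = ((n:ℤ)*μ) * (x w1 - x w2) := by
      have := hsum_d
      ring_nf at e1 e2 ⊢
      linarith [e1, e2]
    have hdvd : ((n * μ : ℕ) : ℤ) ∣ m := ⟨x w1 - x w2, by push_cast; rw [hmval]⟩
    rw [hm] at hdvd
    exact_mod_cast hdvd
  exact Nat.dvd_antisymm h1 h2
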